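/- Let $t > 0$ be a real number and let $G$ be a $(P_4 \cup P_1)$-free graph on $n$ vertices with a cutset $S$ such that $G-S$ has exactly two components $D_1$ and $D_2$, each of order at least $\frac{2n}{t+1}$, and every vertex of $S$ has a neighbor in $D_1$ and a neighbor in $D_2$. Let $S_0 = \{x \in S : |N_G(x) \cap (V(D_1) \cup V(D_2))| < \frac{n}{t+1}\}$. Then for any two distinct vertices $x, y \in S_0$, either $N_G(x) \cap V(D_1) \subseteq N_G(y) \cap V(D_1)$ or $N_G(y) \cap V(D_1) \subseteq N_G(x) \cap V(D_1)$. -/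
import Mathlib


open SimpleGraph

/-- The number of connected components of `G - S`. -/
noncomputable def ncomps {V : Type*} (G : SimpleGraph V) (S : Set V) : ℕ :=
  Nat.card (G.induce Sᶜ).ConnectedComponent

/-- The graph `P₄ ∪ P₁`: a path on four vertices plus an isolated vertex. -/
def P4P1 : SimpleGraph (Fin 5) :=
  SimpleGraph.fromEdgeSet {s((0 : Fin 5), (1 : Fin 5)), s((1 : Fin 5), (2 : Fin 5)),
    s((2 : Fin 5), (3 : Fin 5))}

/-- `G` has no induced subgraph isomorphic to `P₄ ∪ P₁`. -/
def P4P1Free {V : Type*} (G : SimpleGraph V) : Prop := IsEmpty (P4P1 ↪g G)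

/-- `G` has no induced subgraph isomorphic to `P₄`. -/
def P4Free {V : Type*} (G : SimpleGraph V) : Prop := IsEmpty (SimpleGraph.pathGraph 4 ↪g G)

/-- `G` is `t`-tough. -/
def Tough {V : Type*} (t : ℝ) (G : SimpleGraph V) : Prop :=
  ∀ S : Set V, 2 ≤ ncomps G S → t * (ncomps G S : ℝ) ≤ (S.ncard : ℝ)

/-- `S` is a cutset of `G`, i.e. `G - S` is disconnected. -/
def IsCutset {V : Type*} (G : SimpleGraph V) (S : Set V) : Prop :=
  2 ≤ ncomps G S

/-- `S` is a scattering set of `G`. -/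
def IsScatSet {V : Type*} (G : SimpleGraph V) (S : Set V) : Prop :=
  2 ≤ ncomps G S ∧ ∀ T : Set V, 2 ≤ ncomps G T →
    (ncomps G T : ℤ) - (T.ncard : ℤ) ≤ (ncomps G S : ℤ) - (S.ncard : ℤ)

/-- `S` is a maximal scattering set of `G`. -/
def IsMaxScatSet {V : Type*} (G : SimpleGraph V) (S : Set V) : Prop :=
  IsScatSet G S ∧ ∀ T : Set V, IsScatSet G T → S ⊆ T → S = T

/-- `G` is `t`-tough with respect to `S`. -/
def ToughWrt {V : Type*} (t : ℝ) (G : SimpleGraph V) (S : Set V) : Prop :=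
  ∀ W : Set V, 2 ≤ ncomps G W →
    (∀ c : (G.induce Sᶜ).ConnectedComponent,
      ∃ v : ↥Sᶜ, (G.induce Sᶜ).connectedComponentMk v = c ∧ (v : V) ∉ W) →
    t * (ncomps G W : ℝ) ≤ (W.ncard : ℝ)

lemma P4P1_adj_iff : ∀ i j : Fin 5, P4P1.Adj i j ↔
    ((i=0∧j=1)∨(i=1∧j=0)∨(i=1∧j=2)∨(i=2∧j=1)∨(i=2∧j=3)∨(i=3∧j=2)) := by
  intro i j
  simp only [P4P1, SimpleGraph.fromEdgeSet_adj, Set.mem_insert_iff, Set.mem_singleton_iff,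
    Sym2.eq_iff]
  fin_cases i <;> fin_cases j <;> simp

lemma no_p4p1 {V : Type*} {G : SimpleGraph V} (hfree : P4P1Free G) {v0 v1 v2 v3 v4 : V}
    (h01 : G.Adj v0 v1) (h12 : G.Adj v1 v2) (h23 : G.Adj v2 v3)
    (h02 : ¬G.Adj v0 v2) (h03 : ¬G.Adj v0 v3) (h13 : ¬G.Adj v1 v3)
    (h04 : ¬G.Adj v0 v4) (h14 : ¬G.Adj v1 v4) (h24 : ¬G.Adj v2 v4) (h34 : ¬G.Adj v3 v4) :
    False := by
  have n01 : v0 ≠ v1 := h01.ne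
  have n12 : v1 ≠ v2 := h12.ne
  have n23 : v2 ≠ v3 := h23.ne
  have n02 : v0 ≠ v2 := fun h => h03 (h ▸ h23)
  have n03 : v0 ≠ v3 := fun h => h02 (h ▸ h23.symm)
  have n13 : v1 ≠ v3 := fun h => h03 (h ▸ h01)
  have n04 : v0 ≠ v4 := fun h => h14 (h ▸ h01.symm)
  have n14 : v1 ≠ v4 := fun h => h04 (h ▸ h01)
  have n24 : v2 ≠ v4 := fun h => h14 (h ▸ h12)
  have n34 : v3 ≠ v4 := fun h => h24 (h ▸ h23)
  have h02' : ¬G.Adj v2 v0 := fun h => h02 h.symm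
  have h03' : ¬G.Adj v3 v0 := fun h => h03 h.symm
  have h13' : ¬G.Adj v3 v1 := fun h => h13 h.symm
  have h04' : ¬G.Adj v4 v0 := fun h => h04 h.symm
  have h14' : ¬G.Adj v4 v1 := fun h => h14 h.symm
  have h24' : ¬G.Adj v4 v2 := fun h => h24 h.symm
  have h34' : ¬G.Adj v4 v3 := fun h => h34 h.symm
  let f : Fin 5 → V := ![v0, v1, v2, v3, v4]
  have hinj : Function.Injective f := by
    intro i j hij
    fin_cases i <;> fin_cases j <;> simp_all [f]
  refine hfree.elim ⟨⟨f, hinj⟩, @fun i j => ?_⟩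
  rw [P4P1_adj_iff]
  fin_cases i <;> fin_cases j <;>
    simp [f, h01, h12, h23, h01.symm, h12.symm, h23.symm, h02, h03, h13, h04, h14, h24, h34,
      h02', h03', h13', h04', h14', h24', h34', G.irrefl]

lemma core {V : Type*} {G : SimpleGraph V} (hfree : P4P1Free G) {A1 A2 : Set V}
    (hcross : ∀ u ∈ A1, ∀ v ∈ A2, ¬G.Adj u v)
    {x y a b c w q : V}
    (haA1 : a ∈ A1) (hax : G.Adj x a) (hay : ¬G.Adj y a)
    (hbA1 : b ∈ A1) (hby : G.Adj y b) (hbx : ¬G.Adj x b)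
    (hcA1 : c ∈ A1) (hcx : ¬G.Adj x c) (hcy : ¬G.Adj y c)
    (hwA2 : w ∈ A2) (hwx : ¬G.Adj x w) (hwy : ¬G.Adj y w)
    (hqA2 : q ∈ A2) (hqw : G.Adj q w) (hqx : G.Adj q x) : False := by
  have cr : ∀ u ∈ A1, ∀ v ∈ A2, ¬G.Adj u v := hcross
  have hab : G.Adj a b := by
    by_contra hab
    -- P4 : w - q - x - a,  P1 : b
    exact no_p4p1 hfree hqw.symm hqx hax
      (fun h => hwx h.symm) (fun h => cr a haA1 w hwA2 h.symm) (fun h => cr a haA1 q hqA2 h.symm)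
      (fun h => cr b hbA1 w hwA2 h.symm) (fun h => cr b hbA1 q hqA2 h.symm)
      (fun h => hbx h) (fun h => hab h)
  have hxyadj : G.Adj x y := by
    by_contra hxyadj
    -- P4 : y - b - a - x,  P1 : w
    exact no_p4p1 hfree hby hab.symm hax.symm
      hay (fun h => hxyadj h.symm) (fun h => hbx h.symm)
      hwy (fun h => cr b hbA1 w hwA2 h) (fun h => cr a haA1 w hwA2 h) hwx
  have hca : G.Adj c a := by
    by_contra hca
    -- P4 : a - x - q - w,  P1 : c
    exact no_p4p1 hfree hax.symm hqx.symm hqw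
      (fun h => cr a haA1 q hqA2 h) (fun h => cr a haA1 w hwA2 h) hwx
      (fun h => hca h.symm) hcx (fun h => cr c hcA1 q hqA2 h.symm)
      (fun h => cr c hcA1 w hwA2 h.symm)
  -- P4 : c - a - x - y,  P1 : w
  exact no_p4p1 hfree hca hax.symm hxyadj
    (fun h => hcx h.symm) (fun h => hcy h.symm) (fun h => hay h.symm)
    (fun h => cr c hcA1 w hwA2 h) (fun h => cr a haA1 w hwA2 h) hwx hwy

theorem stmt19 {V : Type*} [Fintype V] (G : SimpleGraph V) (t : ℝ) (ht : 0 < t)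
    (hfree : P4P1Free G) (S : Set V) (hS : IsCutset G S)
    (c1 c2 : (G.induce Sᶜ).ConnectedComponent) (hcc : c1 ≠ c2)
    (hall : ∀ c : (G.induce Sᶜ).ConnectedComponent, c = c1 ∨ c = c2)
    (A1 A2 : Set V)
    (hA1 : A1 = {v : V | ∃ h : v ∈ Sᶜ, (G.induce Sᶜ).connectedComponentMk ⟨v, h⟩ = c1})
    (hA2 : A2 = {v : V | ∃ h : v ∈ Sᶜ, (G.induce Sᶜ).connectedComponentMk ⟨v, h⟩ = c2})
    (hbig1 : 2 * (Fintype.card V : ℝ) / (t + 1) ≤ (A1.ncard : ℝ))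
    (hbig2 : 2 * (Fintype.card V : ℝ) / (t + 1) ≤ (A2.ncard : ℝ))
    (hnbr : ∀ x ∈ S, (∃ u ∈ A1, G.Adj x u) ∧ (∃ u ∈ A2, G.Adj x u))
    (S0 : Set V)
    (hS0 : S0 = {x : V | x ∈ S ∧
      ((G.neighborSet x ∩ (A1 ∪ A2)).ncard : ℝ) < (Fintype.card V : ℝ) / (t + 1)})
    (x y : V) (hx : x ∈ S0) (hy : y ∈ S0) (hxy : x ≠ y) :
    G.neighborSet x ∩ A1 ⊆ G.neighborSet y ∩ A1 ∨
    G.neighborSet y ∩ A1 ⊆ G.neighborSet x ∩ A1 := by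
  classical
  rw [hS0] at hx hy
  obtain ⟨hxS, hxdeg⟩ := hx
  obtain ⟨hyS, hydeg⟩ := hy
  by_contra hcon
  push_neg at hcon
  obtain ⟨h1con, h2con⟩ := hcon
  rw [Set.not_subset] at h1con h2con
  obtain ⟨a, ha, hanb⟩ := h1con
  obtain ⟨b, hb, hbnb⟩ := h2con
  obtain ⟨hax, haA1⟩ := ha
  obtain ⟨hby, hbA1⟩ := hb
  have hax : G.Adj x a := hax
  have hby : G.Adj y b := hby
  have hay : ¬G.Adj y a := fun h => hanb ⟨h, haA1⟩
  have hbx : ¬G.Adj x b := fun h => hbnb ⟨h, hbA1⟩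
  -- basic membership facts
  have hA1sub : A1 ⊆ Sᶜ := by rw [hA1]; rintro v ⟨h, -⟩; exact h
  have hA2sub : A2 ⊆ Sᶜ := by rw [hA2]; rintro v ⟨h, -⟩; exact h
  -- cross non-adjacency
  have hcross : ∀ u ∈ A1, ∀ v ∈ A2, ¬G.Adj u v := by
    intro u hu v hv hadj
    rw [hA1] at hu; rw [hA2] at hv
    obtain ⟨hu1, hu2⟩ := hu
    obtain ⟨hv1, hv2⟩ := hv
    have hadj' : (G.induce Sᶜ).Adj ⟨u, hu1⟩ ⟨v, hv1⟩ := hadj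
    exact hcc (hu2 ▸ hv2 ▸ SimpleGraph.ConnectedComponent.sound hadj'.reachable)
  -- counting: a vertex of A1 nonadjacent to both x and y
  have hcount : ∀ (A : Set V), 2 * (Fintype.card V : ℝ) / (t + 1) ≤ (A.ncard : ℝ) →
      A ⊆ A1 ∪ A2 → ∃ c ∈ A, ¬G.Adj x c ∧ ¬G.Adj y c := by
    intro A hbig hsub
    by_contra hc
    push_neg at hc
    have hsub2 : A ⊆ (G.neighborSet x ∩ (A1 ∪ A2)) ∪ (G.neighborSet y ∩ (A1 ∪ A2)) := by
      intro v hv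
      by_cases hvx : G.Adj x v
      · exact Or.inl ⟨hvx, hsub hv⟩
      · exact Or.inr ⟨hc v hv hvx, hsub hv⟩
    have h1 : A.ncard ≤ (G.neighborSet x ∩ (A1 ∪ A2)).ncard +
        (G.neighborSet y ∩ (A1 ∪ A2)).ncard :=
      le_trans (Set.ncard_le_ncard hsub2 (Set.toFinite _)) (Set.ncard_union_le _ _)
    have h1' : (A.ncard : ℝ) ≤ ((G.neighborSet x ∩ (A1 ∪ A2)).ncard : ℝ) +
        ((G.neighborSet y ∩ (A1 ∪ A2)).ncard : ℝ) := by exact_mod_cast h1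
    have h2 : 2 * (Fintype.card V : ℝ) / (t + 1)
        = (Fintype.card V : ℝ) / (t + 1) + (Fintype.card V : ℝ) / (t + 1) := by ring
    linarith
  obtain ⟨c, hcA1, hcx, hcy⟩ := hcount A1 hbig1 (fun v hv => Or.inl hv)
  obtain ⟨w, hwA2, hwx, hwy⟩ := hcount A2 hbig2 (fun v hv => Or.inr hv)
  obtain ⟨-, u0, hu0A2, hxu0⟩ := hnbr x hxS
  -- membership in A2 via component
  have hA2mem : ∀ v : ↥Sᶜ, (G.induce Sᶜ).connectedComponentMk v = c2 → ↑v ∈ A2 := by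
    intro v hv
    rw [hA2]
    exact ⟨v.2, by rw [Subtype.coe_eta]; exact hv⟩
  have hA2mk : ∀ (v : V) (hv : v ∈ A2), (G.induce Sᶜ).connectedComponentMk ⟨v, hA2sub hv⟩ = c2 := by
    intro v hv
    rw [hA2] at hv
    obtain ⟨h1, h2⟩ := hv
    exact h2
  -- all vertices of a walk starting in A2 are in A2
  have hsupp_all : ∀ (d f : ↥Sᶜ) (p : (G.induce Sᶜ).Walk d f),
      (G.induce Sᶜ).connectedComponentMk d = c2 → ∀ v ∈ p.support, ↑v ∈ A2 := by
    intro d f p hd v hv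
    have hr : (G.induce Sᶜ).Reachable d v := (p.takeUntil v hv).reachable
    exact hA2mem v (by rw [← SimpleGraph.ConnectedComponent.sound hr, hd])
  -- minimal walk from the x/y-neighborhood in A2 to a free vertex of A2
  set MSet : Set ℕ := {L | ∃ d f : ↥Sᶜ, ∃ p : (G.induce Sᶜ).Walk d f,
    (G.Adj x ↑d ∨ G.Adj y ↑d) ∧ ¬G.Adj x ↑f ∧ ¬G.Adj y ↑f ∧
    (∀ v ∈ p.support, ↑v ∈ A2) ∧ p.length = L} with hMSet
  have hMne : ∃ L, L ∈ MSet := by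
    have hu0c : (G.induce Sᶜ).connectedComponentMk ⟨u0, hA2sub hu0A2⟩ = c2 := hA2mk u0 hu0A2
    have hwc : (G.induce Sᶜ).connectedComponentMk ⟨w, hA2sub hwA2⟩ = c2 := hA2mk w hwA2
    have hreach : (G.induce Sᶜ).Reachable ⟨u0, hA2sub hu0A2⟩ ⟨w, hA2sub hwA2⟩ :=
      (SimpleGraph.ConnectedComponent.eq).mp (hu0c.trans hwc.symm)
    obtain ⟨p0⟩ := hreach
    exact ⟨p0.length, ⟨u0, hA2sub hu0A2⟩, ⟨w, hA2sub hwA2⟩, p0, Or.inl hxu0, hwx, hwy,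
      hsupp_all _ _ p0 hu0c, rfl⟩
  obtain ⟨d, f, p, hd, hfx, hfy, hsupp, hlen⟩ := Nat.find_spec hMne
  cases p with
  | nil =>
    rcases hd with h | h
    · exact absurd h hfx
    · exact absurd h hfy
  | cons h1 rest =>
    rename_i v1
    cases rest with
    | nil =>
      -- length-1 walk: d adjacent (in G) to f, d hits x or y
      have hdA2 : ↑d ∈ A2 := hsupp d (SimpleGraph.Walk.start_mem_support _)
      have hfA2 : ↑f ∈ A2 := hsupp f (SimpleGraph.Walk.end_mem_support _)
      have hdf : G.Adj ↑d ↑f := h1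
      rcases hd with h | h
      · exact core hfree hcross haA1 hax hay hbA1 hby hbx hcA1 hcx hcy
          hfA2 hfx hfy hdA2 hdf h.symm
      · exact core hfree hcross hbA1 hby hbx haA1 hax hay hcA1 hcy hcx
          hfA2 hfy hfx hdA2 hdf h.symm
    | cons h2 rest2 =>
      rename_i v2
      have hlen2 : rest2.length + 2 = Nat.find hMne := by
        simpa [SimpleGraph.Walk.length_cons] using hlen
      have hdA2 : ↑d ∈ A2 := hsupp d (SimpleGraph.Walk.start_mem_support _)
      have hv1A2 : ↑v1 ∈ A2 := by
        apply hsupp v1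
        rw [SimpleGraph.Walk.support_cons]
        exact List.mem_cons_of_mem _ (SimpleGraph.Walk.start_mem_support _)
      have hv2A2 : ↑v2 ∈ A2 := by
        apply hsupp v2
        rw [SimpleGraph.Walk.support_cons, SimpleGraph.Walk.support_cons]
        exact List.mem_cons_of_mem _ (List.mem_cons_of_mem _
          (SimpleGraph.Walk.start_mem_support _))
      have hsupp1 : ∀ v ∈ (SimpleGraph.Walk.cons h2 rest2).support, (↑v : V) ∈ A2 := by
        intro v hv
        apply hsupp v
        rw [SimpleGraph.Walk.support_cons]
        exact List.mem_cons_of_mem _ hv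
      have hsupp2 : ∀ v ∈ rest2.support, (↑v : V) ∈ A2 := by
        intro v hv
        apply hsupp1 v
        rw [SimpleGraph.Walk.support_cons]
        exact List.mem_cons_of_mem _ hv
      -- v1 is adjacent to neither x nor y
      have hnv1 : ¬(G.Adj x ↑v1 ∨ G.Adj y ↑v1) := by
        intro hadj
        exact Nat.find_min hMne (m := rest2.length + 1) (by omega)
          ⟨v1, f, SimpleGraph.Walk.cons h2 rest2, hadj, hfx, hfy, hsupp1, by
            simp [SimpleGraph.Walk.length_cons]⟩
      have hnv2 : ¬(G.Adj x ↑v2 ∨ G.Adj y ↑v2) := by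
        intro hadj
        exact Nat.find_min hMne (m := rest2.length) (by omega)
          ⟨v2, f, rest2, hadj, hfx, hfy, hsupp2, rfl⟩
      -- d not adjacent to v2
      have hdv2 : ¬G.Adj ↑d ↑v2 := by
        intro hadj
        have hadj' : (G.induce Sᶜ).Adj d v2 := hadj
        have hsupp3 : ∀ v ∈ (SimpleGraph.Walk.cons hadj' rest2).support, (↑v : V) ∈ A2 := by
          intro v hv
          rw [SimpleGraph.Walk.support_cons, List.mem_cons] at hv
          rcases hv with hv | hv
          · exact hv ▸ hdA2
          · exact hsupp2 v hv
        exact Nat.find_min hMne (m := rest2.length + 1) (by omega)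
          ⟨d, f, SimpleGraph.Walk.cons hadj' rest2, hd, hfx, hfy, hsupp3, by
            simp [SimpleGraph.Walk.length_cons]⟩
      push_neg at hnv1 hnv2
      have g1 : G.Adj (↑v2 : V) ↑v1 := (h2 : G.Adj (v1 : V) v2).symm
      have g2 : G.Adj (↑v1 : V) ↑d := (h1 : G.Adj (d : V) v1).symm
      rcases hd with h | h
      · -- P4 : v2 - v1 - d - x,  P1 : c
        exact no_p4p1 hfree g1 g2 h.symm
          (fun hh => hdv2 hh.symm) (fun hh => hnv2.1 hh.symm) (fun hh => hnv1.1 hh.symm)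
          (fun hh => hcross c hcA1 ↑v2 hv2A2 hh.symm) (fun hh => hcross c hcA1 ↑v1 hv1A2 hh.symm)
          (fun hh => hcross c hcA1 ↑d hdA2 hh.symm) hcx
      · -- P4 : v2 - v1 - d - y,  P1 : c
        exact no_p4p1 hfree g1 g2 h.symm
          (fun hh => hdv2 hh.symm) (fun hh => hnv2.2 hh.symm) (fun hh => hnv1.2 hh.symm)
          (fun hh => hcross c hcA1 ↑v2 hv2A2 hh.symm) (fun hh => hcross c hcA1 ↑v1 hv1A2 hh.symm)
          (fun hh => hcross c hcA1 ↑d hdA2 hh.symm) hcy
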